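/- Let q be a prime power, n a positive integer with n | q - 1, F a finite field with q elements, a ∈ F such that X^n - a is irreducible over F, K = F[X]/(X^n - a), α ∈ K the image of X, b ∈ F, h = a^((q-1)/n) ∈ F, and g = α + b. Then for every natural number e < q^n with base-q digits e_0, e_1, ..., e_{n-1} (so that e = e_0 + e_1 q + ⋯ + e_{n-1} q^{n-1} with 0 ≤ e_i ≤ q - 1), one has g^e = ∏_{i=0}^{n-1} (h^i · α + b)^{e_i} in K. -/

import Mathlib

open Polynomial

lemma ofDigits_eq_sum_getD (b : ℕ) : ∀ (L : List ℕ) (m : ℕ), L.length ≤ m →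
    Nat.ofDigits b L = ∑ i ∈ Finset.range m, L.getD i 0 * b ^ i := by
  intro L
  induction L with
  | nil => intro m _; simp [Nat.ofDigits]
  | cons hd tl ih =>
    intro m hm
    cases m with
    | zero => simp at hm
    | succ m =>
      rw [Nat.ofDigits_cons, Finset.sum_range_succ']
      simp only [List.getD_cons_succ, List.getD_cons_zero, pow_zero, mul_one]
      rw [ih m (by simpa using hm), Finset.mul_sum, add_comm]
      congr 1
      exact Finset.sum_congr rfl fun i _ => by ring

/-- In the Kummer extension `K = F[X]/(X^n - a)`, with `g = α + b` and `h = a^((q-1)/n)`,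
for `e < q^n` with base-`q` digits `e_i`, we have `g^e = ∏ i < n, (h^i * α + b)^(e_i)`. -/
theorem pow_eq_prod_digits
    (q n : ℕ) (hq : IsPrimePow q) (hn : 0 < n) (hdvd : n ∣ q - 1)
    (F : Type*) [Field F] [Fintype F] (hF : Fintype.card F = q)
    (a : F) (hirr : Irreducible (X ^ n - C a : F[X]))
    (b : F) (h : F) (hh : h = a ^ ((q - 1) / n))
    (e : ℕ) (he : e < q ^ n) :
    (AdjoinRoot.root (X ^ n - C a : F[X]) + AdjoinRoot.of (X ^ n - C a : F[X]) b) ^ e =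
      ∏ i ∈ Finset.range n,
        (AdjoinRoot.of (X ^ n - C a : F[X]) (h ^ i) * AdjoinRoot.root (X ^ n - C a : F[X]) +
          AdjoinRoot.of (X ^ n - C a : F[X]) b) ^ ((Nat.digits q e).getD i 0) := by
  obtain ⟨p, k, hp, hk, hpk⟩ := hq
  have hpn : p.Prime := Nat.prime_iff.mpr hp
  haveI : Fact p.Prime := ⟨hpn⟩
  have hq2 : 2 ≤ q := by
    have := hpn.two_le
    calc 2 ≤ p := this
      _ ≤ p ^ k := Nat.le_self_pow (by omega) p
      _ = q := hpk
  -- characteristic of F is p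
  haveI hcharF : CharP F p := by
    haveI : CharP F (ringChar F) := ringChar.charP F
    obtain ⟨m, _, hcard⟩ := FiniteField.card F (ringChar F)
    have hrprime : (ringChar F).Prime := CharP.char_is_prime F (ringChar F)
    have h1 : p ^ k = ringChar F ^ (m : ℕ) := by rw [hpk, ← hF, hcard]
    have h2 : p ∣ ringChar F ^ (m : ℕ) := h1 ▸ dvd_pow_self p (by omega)
    have h3 : p = ringChar F :=
      (Nat.prime_dvd_prime_iff_eq hpn hrprime).mp (hpn.dvd_of_dvd_pow h2)
    rw [h3]; infer_instance
  haveI : Fact (Irreducible (X ^ n - C a : F[X])) := ⟨hirr⟩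
  set K := AdjoinRoot (X ^ n - C a : F[X])
  haveI : CharP K p := charP_of_injective_algebraMap' (A := K) F p
  set α : K := AdjoinRoot.root (X ^ n - C a : F[X]) with hα
  set φ : F →+* K := AdjoinRoot.of (X ^ n - C a : F[X]) with hφ
  -- Frobenius facts
  have hofpow : ∀ c : F, (φ c) ^ q = φ c := by
    intro c
    rw [← map_pow]
    congr 1
    have := FiniteField.pow_card c
    rwa [hF] at this
  have hαn : α ^ n = φ a := root_X_pow_sub_C_pow n a
  have hαq : α ^ q = φ h * α := by
    have hq1 : q - 1 + 1 = q := by omega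
    have hdm : (q - 1) / n * n = q - 1 := Nat.div_mul_cancel hdvd
    calc α ^ q = α ^ (q - 1 + 1) := by rw [hq1]
      _ = α ^ (q - 1) * α := by rw [pow_succ]
      _ = (α ^ n) ^ ((q - 1) / n) * α := by rw [← pow_mul, mul_comm n, hdm]
      _ = φ h * α := by rw [hαn, ← map_pow, hh]
  -- the key Frobenius iteration
  have key : ∀ i : ℕ, (α + φ b) ^ q ^ i = φ (h ^ i) * α + φ b := by
    intro i
    induction i with
    | zero => simp
    | succ i ih =>
      have hfrob : ∀ x y : K, (x + y) ^ q = x ^ q + y ^ q := by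
        intro x y
        rw [← hpk]
        exact add_pow_char_pow (R := K) (p := p) (n := k) (x := x) (y := y)
      calc (α + φ b) ^ q ^ (i + 1) = ((α + φ b) ^ q ^ i) ^ q := by
            rw [← pow_mul, pow_succ]
        _ = (φ (h ^ i) * α + φ b) ^ q := by rw [ih]
        _ = (φ (h ^ i)) ^ q * α ^ q + (φ b) ^ q := by rw [hfrob, mul_pow]
        _ = φ (h ^ i) * (φ h * α) + φ b := by rw [hofpow, hαq, hofpow]
        _ = φ (h ^ (i + 1)) * α + φ b := by rw [pow_succ, map_mul]; ring
  -- digits of e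
  have hlen : (Nat.digits q e).length ≤ n := by
    by_contra hc
    push_neg at hc
    rcases eq_or_ne e 0 with rfl | he0
    · simp at hc
    · have h1 := Nat.base_pow_length_digits_le q e (by omega) he0
      have h2 : q ^ (n + 1) ≤ q * e :=
        le_trans (Nat.pow_le_pow_right (by omega) hc) h1
      rw [pow_succ, mul_comm q e] at h2
      have h3 : q ^ n ≤ e := Nat.le_of_mul_le_mul_right h2 (by omega)
      omega
  have hesum : e = ∑ i ∈ Finset.range n, (Nat.digits q e).getD i 0 * q ^ i := by
    conv_lhs => rw [← Nat.ofDigits_digits q e]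
    exact ofDigits_eq_sum_getD q (Nat.digits q e) n hlen
  calc (α + φ b) ^ e
      = (α + φ b) ^ ∑ i ∈ Finset.range n, (Nat.digits q e).getD i 0 * q ^ i := by
        rw [← hesum]
    _ = ∏ i ∈ Finset.range n, (α + φ b) ^ ((Nat.digits q e).getD i 0 * q ^ i) := by
        rw [Finset.prod_pow_eq_pow_sum]
    _ = ∏ i ∈ Finset.range n, (φ (h ^ i) * α + φ b) ^ ((Nat.digits q e).getD i 0) := by
        refine Finset.prod_congr rfl fun i _ => ?_
        rw [mul_comm, pow_mul, key i]
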